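/- arXiv:1707.06979 — 7 statements merged into one kernel-verified Lean document; each statement's English description precedes it below -/
import Mathlib

section
/- Let U and V be Hilbert spaces and b : U × V → ℝ a bounded bilinear form satisfying the inf-sup condition with constant C_b > 0 (i.e., for all u ∈ U, sup over v ≠ 0 of b(u,v)/‖v‖_V ≥ C_b ‖u‖_U) and such that b(u,·) = 0 for all v implies u = 0. Define the trial-to-test operator Θ : U → V by ⟨Θu, v⟩_V = b(u,v) for all v ∈ V. Then for all u ∈ U, C_b² ‖u‖_U² ≤ b(u, Θu) ≤ ‖b‖² ‖u‖_U², where ‖b‖ is the boundedness constant of b. -/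
open scoped RealInnerProductSpace

/-- Ideal DPG: `C_b^2 ‖u‖² ≤ b(u, Θu) ≤ ‖b‖² ‖u‖²` for the trial-to-test operator Θ. -/
theorem stmt0
    {U V : Type*} [NormedAddCommGroup U] [InnerProductSpace ℝ U] [CompleteSpace U]
    [NormedAddCommGroup V] [InnerProductSpace ℝ V] [CompleteSpace V]
    (b : U →L[ℝ] V →L[ℝ] ℝ) (Mb Cb : ℝ) (hCb : 0 < Cb)
    (hbound : ∀ (u : U) (v : V), |b u v| ≤ Mb * ‖u‖ * ‖v‖)
    (hinfsup : ∀ u : U, Cb * ‖u‖ ≤ ⨆ (v : {v : V // v ≠ 0}), b u (v : V) / ‖(v : V)‖)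
    (hinj : ∀ u : U, (∀ v : V, b u v = 0) → u = 0)
    (Θ : U → V) (hΘ : ∀ (u : U) (v : V), ⟪Θ u, v⟫ = b u v) :
    ∀ u : U, Cb ^ 2 * ‖u‖ ^ 2 ≤ b u (Θ u) ∧ b u (Θ u) ≤ Mb ^ 2 * ‖u‖ ^ 2 := by
  intro u
  have hkey : b u (Θ u) = ‖Θ u‖ ^ 2 := by
    rw [← hΘ u (Θ u), real_inner_self_eq_norm_sq]
  -- sup bound : sup ≤ ‖Θ u‖ via Cauchy–Schwarz
  have hsup : Cb * ‖u‖ ≤ ‖Θ u‖ := by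
    refine le_trans (hinfsup u) ?_
    by_cases hne : Nonempty {v : V // v ≠ 0}
    · refine Real.iSup_le (fun v => ?_) (norm_nonneg _)
      rw [div_le_iff₀ (norm_pos_iff.mpr v.2), ← hΘ u (v : V)]
      calc ⟪Θ u, (v : V)⟫ ≤ |⟪Θ u, (v : V)⟫| := le_abs_self _
        _ ≤ ‖Θ u‖ * ‖(v : V)‖ := abs_real_inner_le_norm _ _
    · haveI := not_nonempty_iff.mp hne
      rw [Real.iSup_of_isEmpty]
      exact norm_nonneg _
  constructor
  · rw [hkey]
    calc Cb ^ 2 * ‖u‖ ^ 2 = (Cb * ‖u‖) ^ 2 := by ring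
      _ ≤ ‖Θ u‖ ^ 2 := by
        apply pow_le_pow_left₀ (by positivity) hsup
  · -- ‖Θ u‖ ≤ Mb * ‖u‖
    have h1 : ‖Θ u‖ ^ 2 ≤ Mb * ‖u‖ * ‖Θ u‖ := by
      rw [← hkey]
      exact le_trans (le_abs_self _) (hbound u (Θ u))
    rw [hkey]
    rcases eq_or_lt_of_le (norm_nonneg (Θ u)) with h0 | h0
    · rw [← h0]; nlinarith [sq_nonneg (Mb * ‖u‖)]
    · have h2 : ‖Θ u‖ ≤ Mb * ‖u‖ := by
        have := h1
        rw [pow_two] at this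
        exact le_of_mul_le_mul_right this h0
      calc ‖Θ u‖ ^ 2 ≤ (Mb * ‖u‖) ^ 2 := pow_le_pow_left₀ (norm_nonneg _) h2 2
        _ = Mb ^ 2 * ‖u‖ ^ 2 := by ring
end

section
/- Let U, V be Hilbert spaces, b a bounded bilinear form on U × V with boundedness constant ‖b‖ and inf-sup constant C_b > 0, and let B : U → V' be defined by (Bu)(v) = b(u,v). Let Θ : U → V be the trial-to-test operator. Given F ∈ V', let u ∈ U solve b(u,v) = F(v) for all v ∈ V, and let U_h ⊆ U be a closed subspace with u_h ∈ U_h solving b(u_h, Θw_h) = F(Θw_h) for all w_h ∈ U_h. Then ‖B(u − u_h)‖_{V'} = min over w_h ∈ U_h of ‖B(u − w_h)‖_{V'}. -/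
open scoped RealInnerProductSpace

/-- Ideal DPG method: the residual `‖B(u − u_h)‖_{V'}` is minimal over the discrete space. -/
theorem stmt1
    {U V : Type*} [NormedAddCommGroup U] [InnerProductSpace ℝ U] [CompleteSpace U]
    [NormedAddCommGroup V] [InnerProductSpace ℝ V] [CompleteSpace V]
    (b : U →L[ℝ] V →L[ℝ] ℝ) (Mb Cb : ℝ) (hCb : 0 < Cb)
    (hbound : ∀ (u : U) (v : V), |b u v| ≤ Mb * ‖u‖ * ‖v‖)
    (hinfsup : ∀ u : U, Cb * ‖u‖ ≤ ‖b u‖)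
    (hinj : ∀ v : V, (∀ u : U, b u v = 0) → v = 0)
    (Θ : U → V) (hΘ : ∀ (u : U) (v : V), ⟪Θ u, v⟫ = b u v)
    (Uh : Submodule ℝ U) (hUh : IsClosed (Uh : Set U))
    (F : V →L[ℝ] ℝ) (u : U) (hu : ∀ v : V, b u v = F v)
    (uh : U) (huh : uh ∈ Uh)
    (hdpg : ∀ wh ∈ Uh, b uh (Θ wh) = F (Θ wh)) :
    IsLeast {c : ℝ | ∃ wh ∈ Uh, c = ‖b (u - wh)‖} ‖b (u - uh)‖ := by
  have hbx : ∀ x : U, (b x) = innerSL ℝ (Θ x) := by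
    intro x
    ext v
    simp [← hΘ x v, real_inner_comm]
  have hnorm : ∀ x : U, ‖b x‖ = ‖Θ x‖ := by
    intro x
    rw [hbx x, innerSL_apply_norm]
  constructor
  · exact ⟨uh, huh, rfl⟩
  · rintro c ⟨wh, hwh, rfl⟩
    rw [hnorm, hnorm]
    set e := u - uh
    set z := uh - wh
    have hz : z ∈ Uh := Uh.sub_mem huh hwh
    have horth : ⟪Θ e, Θ z⟫ = 0 := by
      rw [hΘ]
      have : b e (Θ z) = b u (Θ z) - b uh (Θ z) := by simp [e]
      rw [this, hu, hdpg z hz]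
      ring
    have hadd : Θ (u - wh) = Θ e + Θ z := by
      apply ext_inner_right ℝ
      intro v
      rw [hΘ, inner_add_left, hΘ, hΘ]
      have : u - wh = e + z := by show u - wh = (u - uh) + (uh - wh); abel
      rw [this]
      simp
    rw [hadd]
    have h2 : ‖Θ e + Θ z‖ ^ 2 = ‖Θ e‖ ^ 2 + ‖Θ z‖ ^ 2 := by
      have horth' : ⟪Θ z, Θ e⟫ = 0 := by rw [real_inner_comm]; exact horth
      rw [← real_inner_self_eq_norm_sq, ← real_inner_self_eq_norm_sq,
        ← real_inner_self_eq_norm_sq, inner_add_add_self, horth, horth']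
      ring
    nlinarith [norm_nonneg (Θ e + Θ z), norm_nonneg (Θ e), norm_nonneg (Θ z)]
end

section
/- Under the assumptions: Π^p the L² projection with approximation property ‖v − Π^p v‖ ≤ C₀ h ‖∇_𝒯 v‖ for v ∈ H¹(𝒯), Π_div^p the Raviart–Thomas projection with ‖σ − Π_div^p σ‖ ≤ C_p h^s |σ|_{H^s(Ω)} for s ∈ (1/2, p+1], and the commutativity div Π_div^p = Π^p div, for σ ∈ H^s(Ω)² ∩ H(div,Ω) with s ∈ (1/2, 1) it holds that ‖γ_{n,𝒮}(1 − Π_div^p)σ‖_{−1/2,𝒮} ≤ C (h^s ‖σ‖_{H^s(Ω)} + h ‖div σ‖_{L²(Ω)}), where the skeleton norm is characterized by duality with broken H¹ functions and C depends only on the approximation constants. -/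
open scoped RealInnerProductSpace

/-- Theorem 3.1 (case `s ∈ (1/2,1)`): with the duality characterization of the skeleton
norm `‖·‖_{−1/2,𝒮}`, the approximation properties of the `L²` projection `Π^p` and of the
Raviart–Thomas projection `Π_div^p`, and the commutativity `div Π_div^p = Π^p div`,
`‖γ_{n,𝒮}(1 − Π_div^p)σ‖_{−1/2,𝒮} ≤ C (h^s ‖σ‖_{H^s(Ω)} + h ‖div σ‖)`, where `C`
depends only on the approximation constants.  Setting encoded abstractly as in the
previous statements; `HsNorm σ` represents `‖σ‖_{H^s(Ω)}` for `H^s`-regular fields. -/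
theorem stmt9
    {Hdv Hb L2 L2v : Type*}
    [NormedAddCommGroup Hdv] [InnerProductSpace ℝ Hdv] [CompleteSpace Hdv]
    [NormedAddCommGroup Hb] [InnerProductSpace ℝ Hb] [CompleteSpace Hb]
    [NormedAddCommGroup L2] [InnerProductSpace ℝ L2] [CompleteSpace L2]
    [NormedAddCommGroup L2v] [InnerProductSpace ℝ L2v] [CompleteSpace L2v]
    (Div : Hdv →ₗ[ℝ] L2) (Emb : Hdv →ₗ[ℝ] L2v)
    (Grad : Hb →ₗ[ℝ] L2v) (emb : Hb →ₗ[ℝ] L2)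
    (hnormHb : ∀ v : Hb, ‖v‖ ^ 2 = ‖Grad v‖ ^ 2 + ‖emb v‖ ^ 2)
    (pair : Hdv →ₗ[ℝ] Hb →ₗ[ℝ] ℝ)
    (hpair : ∀ (σ : Hdv) (v : Hb), pair σ v = ⟪Emb σ, Grad v⟫ + ⟪Div σ, emb v⟫)
    (p : ℕ) (h C0 Cp s : ℝ) (hh : 0 < h) (hC0 : 0 < C0) (hCp : 0 < Cp)
    (hs : 1 / 2 < s) (hs1 : s < 1)
    (P : L2 →ₗ[ℝ] L2) (hPproj : ∀ x : L2, P (P x) = P x)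
    (hPorth : ∀ x y : L2, ⟪x - P x, P y⟫ = 0)
    (Pdiv : Hdv →ₗ[ℝ] Hdv) (hcomm : ∀ σ : Hdv, Div (Pdiv σ) = P (Div σ))
    (HsNorm : Hdv → ℝ)
    (happrox1 : ∀ σ : Hdv, ‖Emb σ - Emb (Pdiv σ)‖ ≤ Cp * h ^ s * HsNorm σ)
    (happrox2 : ∀ v : Hb, ‖emb v - P (emb v)‖ ≤ C0 * h * ‖Grad v‖)
    (hPbdd : ∀ x : L2, ‖x - P x‖ ≤ ‖x‖) :
    ∃ C > 0, ∀ σ : Hdv,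
      (⨆ (v : {v : Hb // v ≠ 0}), pair (σ - Pdiv σ) (v : Hb) / ‖(v : Hb)‖)
        ≤ C * (h ^ s * HsNorm σ + h * ‖Div σ‖) := by
  refine ⟨Cp + C0, by linarith, fun σ => ?_⟩
  have hhs : (0:ℝ) < h ^ s := Real.rpow_pos_of_pos hh s
  have hHs : 0 ≤ HsNorm σ := by
    have h1 := happrox1 σ
    have h2 : (0:ℝ) ≤ ‖Emb σ - Emb (Pdiv σ)‖ := norm_nonneg _
    nlinarith [mul_pos hCp (Real.rpow_pos_of_pos hh s)]
  have hRHS : 0 ≤ (Cp + C0) * (h ^ s * HsNorm σ + h * ‖Div σ‖) := by positivity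
  refine Real.iSup_le (fun v => ?_) hRHS
  obtain ⟨v, hv⟩ := v
  have hv0 : 0 < ‖v‖ := norm_pos_iff.mpr hv
  rw [div_le_iff₀ hv0]
  have hGv : ‖Grad v‖ ≤ ‖v‖ := by
    have := hnormHb v
    nlinarith [norm_nonneg (Grad v), norm_nonneg v, norm_nonneg (emb v)]
  have e1 : Emb (σ - Pdiv σ) = Emb σ - Emb (Pdiv σ) := map_sub _ _ _
  have e2 : Div (σ - Pdiv σ) = Div σ - P (Div σ) := by rw [map_sub, hcomm]
  have t1 : ⟪Emb (σ - Pdiv σ), Grad v⟫ ≤ Cp * h ^ s * HsNorm σ * ‖v‖ := by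
    calc ⟪Emb (σ - Pdiv σ), Grad v⟫ ≤ ‖Emb (σ - Pdiv σ)‖ * ‖Grad v‖ :=
          real_inner_le_norm _ _
    _ ≤ (Cp * h ^ s * HsNorm σ) * ‖v‖ :=
        mul_le_mul (e1 ▸ happrox1 σ) hGv (norm_nonneg _) (by positivity)
  have t2 : ⟪Div (σ - Pdiv σ), emb v⟫ ≤ C0 * h * ‖Div σ‖ * ‖v‖ := by
    have horth := hPorth (Div σ) (emb v)
    have key : ⟪Div (σ - Pdiv σ), emb v⟫ = ⟪Div σ - P (Div σ), emb v - P (emb v)⟫ := by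
      rw [e2, inner_sub_right, horth, sub_zero]
    rw [key]
    calc ⟪Div σ - P (Div σ), emb v - P (emb v)⟫
        ≤ ‖Div σ - P (Div σ)‖ * ‖emb v - P (emb v)‖ := real_inner_le_norm _ _
    _ ≤ ‖Div σ‖ * (C0 * h * ‖Grad v‖) :=
        mul_le_mul (hPbdd _) (happrox2 v) (norm_nonneg _) (norm_nonneg _)
    _ ≤ C0 * h * ‖Div σ‖ * ‖v‖ := by nlinarith [mul_nonneg (mul_nonneg (mul_nonneg hC0.le hh.le) (norm_nonneg (Div σ))) (sub_nonneg.mpr hGv)]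
  rw [hpair]
  nlinarith [norm_nonneg (Div σ), mul_nonneg (mul_nonneg hhs.le hHs) hv0.le,
    mul_nonneg (mul_nonneg hh.le (norm_nonneg (Div σ))) hv0.le]
end

section
/- Same setting as before but with s ∈ [1, p+1]: for σ ∈ H^s(Ω)² ∩ H(div,Ω), ‖γ_{n,𝒮}(1 − Π_div^p)σ‖_{−1/2,𝒮} ≤ C h^s ‖σ‖_{H^s(Ω)}, with C depending only on the approximation constants, using additionally that ‖(1 − Π^p) div σ‖ ≤ C h^{s−1} ‖div σ‖_{H^{s−1}(Ω)} and ‖div σ‖_{H^{s−1}(Ω)} ≤ ‖σ‖_{H^s(Ω)}. -/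
open scoped RealInnerProductSpace

/-- Theorem 3.1 (case `s ∈ [1, p+1]`): with the additional approximation property
`‖(1 − Π^p) div σ‖ ≤ C_p h^{s−1} ‖div σ‖_{H^{s−1}(Ω)}` and the bound
`‖div σ‖_{H^{s−1}(Ω)} ≤ ‖σ‖_{H^s(Ω)}`, one obtains
`‖γ_{n,𝒮}(1 − Π_div^p)σ‖_{−1/2,𝒮} ≤ C h^s ‖σ‖_{H^s(Ω)}` with `C` depending only on the
approximation constants.  Setting encoded abstractly as before; `HsNorm σ` and
`HsDivNorm σ` represent `‖σ‖_{H^s(Ω)}` and `‖div σ‖_{H^{s−1}(Ω)}`. -/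
theorem stmt10
    {Hdv Hb L2 L2v : Type*}
    [NormedAddCommGroup Hdv] [InnerProductSpace ℝ Hdv] [CompleteSpace Hdv]
    [NormedAddCommGroup Hb] [InnerProductSpace ℝ Hb] [CompleteSpace Hb]
    [NormedAddCommGroup L2] [InnerProductSpace ℝ L2] [CompleteSpace L2]
    [NormedAddCommGroup L2v] [InnerProductSpace ℝ L2v] [CompleteSpace L2v]
    (Div : Hdv →ₗ[ℝ] L2) (Emb : Hdv →ₗ[ℝ] L2v)
    (Grad : Hb →ₗ[ℝ] L2v) (emb : Hb →ₗ[ℝ] L2)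
    (hnormHb : ∀ v : Hb, ‖v‖ ^ 2 = ‖Grad v‖ ^ 2 + ‖emb v‖ ^ 2)
    (pair : Hdv →ₗ[ℝ] Hb →ₗ[ℝ] ℝ)
    (hpair : ∀ (σ : Hdv) (v : Hb), pair σ v = ⟪Emb σ, Grad v⟫ + ⟪Div σ, emb v⟫)
    (p : ℕ) (h C0 Cp s : ℝ) (hh : 0 < h) (hC0 : 0 < C0) (hCp : 0 < Cp)
    (hs : 1 ≤ s) (hs1 : s ≤ (p : ℝ) + 1)
    (P : L2 →ₗ[ℝ] L2) (hPproj : ∀ x : L2, P (P x) = P x)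
    (hPorth : ∀ x y : L2, ⟪x - P x, P y⟫ = 0)
    (Pdiv : Hdv →ₗ[ℝ] Hdv) (hcomm : ∀ σ : Hdv, Div (Pdiv σ) = P (Div σ))
    (HsNorm HsDivNorm : Hdv → ℝ)
    (happrox1 : ∀ σ : Hdv, ‖Emb σ - Emb (Pdiv σ)‖ ≤ Cp * h ^ s * HsNorm σ)
    (happrox2 : ∀ v : Hb, ‖emb v - P (emb v)‖ ≤ C0 * h * ‖Grad v‖)
    (happrox3 : ∀ σ : Hdv, ‖Div σ - P (Div σ)‖ ≤ Cp * h ^ (s - 1) * HsDivNorm σ)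
    (hdom : ∀ σ : Hdv, HsDivNorm σ ≤ HsNorm σ) :
    ∃ C > 0, ∀ σ : Hdv,
      (⨆ (v : {v : Hb // v ≠ 0}), pair (σ - Pdiv σ) (v : Hb) / ‖(v : Hb)‖)
        ≤ C * (h ^ s * HsNorm σ) := by
  refine ⟨Cp * (1 + C0), by positivity, fun σ => ?_⟩
  have hpow : (0:ℝ) < h ^ s := Real.rpow_pos_of_pos hh s
  have hN : 0 ≤ HsNorm σ := by
    have h1 := (norm_nonneg (Emb σ - Emb (Pdiv σ))).trans (happrox1 σ)
    by_contra hc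
    push_neg at hc
    nlinarith [mul_pos (mul_pos hCp hpow) (neg_pos.mpr hc)]
  have hRHS : 0 ≤ Cp * (1 + C0) * (h ^ s * HsNorm σ) := by positivity
  refine Real.iSup_le (fun v => ?_) hRHS
  obtain ⟨v, hv⟩ := v
  have hvpos : (0:ℝ) < ‖v‖ := norm_pos_iff.mpr hv
  rw [div_le_iff₀ hvpos]
  have hGrad : ‖Grad v‖ ≤ ‖v‖ := by
    have := hnormHb v
    nlinarith [norm_nonneg v, norm_nonneg (Grad v), norm_nonneg (emb v)]
  have hDive : Div (σ - Pdiv σ) = Div σ - P (Div σ) := by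
    rw [map_sub, hcomm]
  have key : pair (σ - Pdiv σ) v
      = ⟪Emb σ - Emb (Pdiv σ), Grad v⟫ + ⟪Div σ - P (Div σ), emb v - P (emb v)⟫ := by
    rw [hpair, hDive, map_sub, inner_sub_right]
    have := hPorth (Div σ) (emb v)
    linarith
  have h1 : ⟪Emb σ - Emb (Pdiv σ), Grad v⟫ ≤ Cp * h ^ s * HsNorm σ * ‖v‖ := by
    calc ⟪Emb σ - Emb (Pdiv σ), Grad v⟫ ≤ ‖Emb σ - Emb (Pdiv σ)‖ * ‖Grad v‖ :=
          real_inner_le_norm _ _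
      _ ≤ (Cp * h ^ s * HsNorm σ) * ‖v‖ := by
          apply mul_le_mul (happrox1 σ) hGrad (norm_nonneg _)
          positivity
  have hpowmul : h ^ (s - 1) * h = h ^ s := by
    nth_rewrite 2 [← Real.rpow_one h]
    rw [← Real.rpow_add hh]
    norm_num
  have h2 : ⟪Div σ - P (Div σ), emb v - P (emb v)⟫
      ≤ Cp * C0 * h ^ s * HsNorm σ * ‖v‖ := by
    calc ⟪Div σ - P (Div σ), emb v - P (emb v)⟫
        ≤ ‖Div σ - P (Div σ)‖ * ‖emb v - P (emb v)‖ := real_inner_le_norm _ _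
      _ ≤ (Cp * h ^ (s - 1) * HsDivNorm σ) * (C0 * h * ‖Grad v‖) := by
          have hp2 : (0:ℝ) < h ^ (s - 1) := Real.rpow_pos_of_pos hh _
          have hD : 0 ≤ HsDivNorm σ := by
            have hle := (norm_nonneg (Div σ - P (Div σ))).trans (happrox3 σ)
            by_contra hc
            push_neg at hc
            nlinarith [mul_pos (mul_pos hCp hp2) (neg_pos.mpr hc)]
          apply mul_le_mul (happrox3 σ) (happrox2 v) (norm_nonneg _)
          positivity
      _ = Cp * C0 * (h ^ (s - 1) * h) * HsDivNorm σ * ‖Grad v‖ := by ring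
      _ = Cp * C0 * h ^ s * HsDivNorm σ * ‖Grad v‖ := by rw [hpowmul]
      _ ≤ Cp * C0 * h ^ s * HsNorm σ * ‖v‖ := by
          have hK : (0:ℝ) ≤ Cp * C0 * h ^ s := by positivity
          have h5 : HsDivNorm σ * ‖Grad v‖ ≤ HsNorm σ * ‖v‖ :=
            mul_le_mul (hdom σ) hGrad (norm_nonneg _) hN
          calc Cp * C0 * h ^ s * HsDivNorm σ * ‖Grad v‖
              = (Cp * C0 * h ^ s) * (HsDivNorm σ * ‖Grad v‖) := by ring
            _ ≤ (Cp * C0 * h ^ s) * (HsNorm σ * ‖v‖) := mul_le_mul_of_nonneg_left h5 hK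
            _ = Cp * C0 * h ^ s * HsNorm σ * ‖v‖ := by ring
  calc pair (σ - Pdiv σ) v ≤ Cp * h ^ s * HsNorm σ * ‖v‖ + Cp * C0 * h ^ s * HsNorm σ * ‖v‖ := by
        rw [key]; linarith
    _ = Cp * (1 + C0) * (h ^ s * HsNorm σ) * ‖v‖ := by ring
end

section
/- Let g ∈ L²(Ω), (v, τ) ∈ H¹₀(Ω) × H(div,Ω) solve div τ + v = g, τ + ∇v = 0, and let Θ : U → V be the trial-to-test operator of the ultra-weak DPG formulation, ⟨Θ𝐮, 𝐯⟩_V = b(𝐮, 𝐯). Then the unique 𝐰 ∈ U with Θ𝐰 = (v, τ) is given explicitly by 𝐰 = (g, 0, γ_{0,𝒮} v, γ_{n,𝒮} τ); equivalently, ⟨(v,τ), (μ, λ)⟩_V = ⟨g, div_𝒯 λ + μ⟩ − ⟨γ_{0,𝒮} v, λ·n⟩_𝒮 − ⟨γ_{n,𝒮} τ, μ⟩_𝒮 for all (μ, λ) ∈ H¹(𝒯) × H(div,𝒯). -/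
open scoped RealInnerProductSpace

/-- Lemma 4.2 (second part, explicit representation of `𝐰` with `Θ𝐰 = (v,τ)`):
if `(v,τ)` solves `div τ + v = g`, `τ + ∇v = 0`, then for all broken test functions
`(μ,λ) ∈ H¹(𝒯) × H(div,𝒯)`,
`⟨(v,τ), (μ,λ)⟩_V = ⟨g, div_𝒯 λ + μ⟩ − ⟨γ_{0,𝒮} v, λ·n⟩_𝒮 − ⟨γ_{n,𝒮} τ, μ⟩_𝒮`,
i.e. `Θ𝐰 = (v,τ)` for `𝐰 = (g, 0, γ_{0,𝒮} v, γ_{n,𝒮} τ)`.  Setting encoded abstractly: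
`Gradb`, `embb`, `Divb`, `Embb` are the broken gradient/divergence operators and `L²`
embeddings on the broken spaces `Hb = H¹(𝒯)` and `Hdvb = H(div,𝒯)`; the `V` inner product
is the canonical one; the skeleton dualities of the (unbroken) `v` and `τ` are given by
elementwise integration by parts:
`⟨γ_{0,𝒮} v, λ·n⟩_𝒮 = ⟨∇v, λ⟩ + ⟨v, div_𝒯 λ⟩` and
`⟨γ_{n,𝒮} τ, μ⟩_𝒮 = ⟨τ, ∇_𝒯 μ⟩ + ⟨div τ, μ⟩`. -/
theorem stmt13
    {Hb Hdvb L2 L2v : Type*}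
    [NormedAddCommGroup Hb] [InnerProductSpace ℝ Hb] [CompleteSpace Hb]
    [NormedAddCommGroup Hdvb] [InnerProductSpace ℝ Hdvb] [CompleteSpace Hdvb]
    [NormedAddCommGroup L2] [InnerProductSpace ℝ L2] [CompleteSpace L2]
    [NormedAddCommGroup L2v] [InnerProductSpace ℝ L2v] [CompleteSpace L2v]
    (Gradb : Hb →ₗ[ℝ] L2v) (embb : Hb →ₗ[ℝ] L2)
    (Divb : Hdvb →ₗ[ℝ] L2) (Embb : Hdvb →ₗ[ℝ] L2v)
    (pr0 : Hb → Hdvb → ℝ) (prn : Hdvb → Hb → ℝ)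
    (hpr0 : ∀ (w : Hb) (lam : Hdvb),
      pr0 w lam = ⟪Gradb w, Embb lam⟫ + ⟪embb w, Divb lam⟫)
    (hprn : ∀ (t : Hdvb) (μ : Hb),
      prn t μ = ⟪Embb t, Gradb μ⟫ + ⟪Divb t, embb μ⟫)
    (g : L2) (v : Hb) (τ : Hdvb)
    (heq1 : Divb τ + embb v = g) (heq2 : Embb τ + Gradb v = 0) :
    ∀ (μ : Hb) (lam : Hdvb),
      ⟪embb v, embb μ⟫ + ⟪Gradb v, Gradb μ⟫ + ⟪Embb τ, Embb lam⟫ + ⟪Divb τ, Divb lam⟫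
        = ⟪g, Divb lam + embb μ⟫ - pr0 v lam - prn τ μ := by
  intro μ lam
  have hτ : Embb τ = -Gradb v := eq_neg_of_add_eq_zero_left heq2
  rw [hpr0, hprn, ← heq1, hτ]
  simp only [inner_add_left, inner_add_right, inner_neg_left, inner_neg_right]
  ring
end

section
/- Let u ∈ H^{1+s}(Ω) for some s ∈ (1/2, p+1] with σ = ∇u, and let (u_h, σ_h) be the field components of a discrete function in U_{hp}. Define the postprocessed solution ũ_h ∈ 𝒫^{p+1}(𝒯) elementwise by ∫_T ∇ũ_h·∇w = ∫_T σ_h·∇w for all w ∈ 𝒫^{p+1}(T) and ∫_T ũ_h = ∫_T u_h. Then ‖u − ũ_h‖_{L²(Ω)} ≤ C h (‖u − u_h‖ + ‖σ − σ_h‖ + h^s ‖u‖_{H^{1+s}(Ω)}) + ‖Π⁰(u − u_h)‖, where Π⁰ is the elementwise L² projection onto constants and C depends only on the approximation constants and shape-regularity. -/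
open scoped RealInnerProductSpace

/-- Lemma 5.1 (postprocessing estimate): if `u ∈ H^{1+s}(Ω)` with `σ = ∇u` and `ũ_h` is
the elementwise postprocessed solution defined by
`∫_T ∇ũ_h·∇w = ∫_T σ_h·∇w` for all `w ∈ 𝒫^{p+1}(T)` and `∫_T ũ_h = ∫_T u_h`, then
`‖u − ũ_h‖ ≤ C h (‖u − u_h‖ + ‖σ − σ_h‖ + h^s ‖u‖_{H^{1+s}(Ω)}) + ‖Π⁰(u − u_h)‖`,
with `C` depending only on the approximation constants and shape-regularity.
Setting encoded abstractly: `Hb` is the broken space `H¹(𝒯)` with broken gradient `Grad`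
and `L²`-embedding `emb`; `P0` is the `L²`-orthogonal projection onto piecewise
constants, satisfying the elementwise Poincaré inequality with constant `Cpo`;
`Wh ⊆ Hb` represents `𝒫^{p+1}(𝒯)`; the postprocessing conditions are the (collected
elementwise) Neumann problems and the mean-value constraints; `Hnorm` represents
`‖u‖_{H^{1+s}(Ω)}` and the interpolation hypothesis encodes the approximation property
`min_{w ∈ 𝒫^{p+1}(𝒯)} ‖∇_𝒯(u − w)‖ ≤ C_I h^s ‖u‖_{H^{1+s}(Ω)}` (with elementwise
matching means). -/
theorem stmt15
    {Hb L2 L2v : Type*}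
    [NormedAddCommGroup Hb] [InnerProductSpace ℝ Hb] [CompleteSpace Hb]
    [NormedAddCommGroup L2] [InnerProductSpace ℝ L2] [CompleteSpace L2]
    [NormedAddCommGroup L2v] [InnerProductSpace ℝ L2v] [CompleteSpace L2v]
    (Grad : Hb →ₗ[ℝ] L2v) (emb : Hb →ₗ[ℝ] L2)
    (P0 : L2 →ₗ[ℝ] L2) (hP0proj : ∀ x : L2, P0 (P0 x) = P0 x)
    (hP0orth : ∀ x y : L2, ⟪x - P0 x, P0 y⟫ = 0)
    (Wh : Submodule ℝ Hb)
    (p : ℕ) (h s Cpo CI : ℝ) (hh : 0 < h) (hs : 1 / 2 < s) (hs1 : s ≤ (p : ℝ) + 1)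
    (hCpo : 0 < Cpo) (hCI : 0 < CI)
    (hpoincare : ∀ w : Hb, ‖emb w - P0 (emb w)‖ ≤ Cpo * h * ‖Grad w‖) :
    ∃ C > 0, ∀ (u : Hb) (Hnorm : ℝ) (uh tuh : Hb) (σh : L2v),
      tuh ∈ Wh →
      (∀ w ∈ Wh, ⟪Grad tuh, Grad w⟫ = ⟪σh, Grad w⟫) →
      P0 (emb tuh) = P0 (emb uh) →
      (∃ w ∈ Wh, ‖Grad u - Grad w‖ ≤ CI * h ^ s * Hnorm
          ∧ P0 (emb u) = P0 (emb w)) →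
      ‖emb u - emb tuh‖
        ≤ C * h * (‖emb u - emb uh‖ + ‖Grad u - σh‖ + h ^ s * Hnorm)
          + ‖P0 (emb u - emb uh)‖ := by

  refine ⟨Cpo * (2 * CI + 1), by positivity, ?_⟩
  rintro u Hnorm uh tuh σh htuh hgal hmean ⟨w, hwW, hwapp, hwmean⟩
  have hps : (0:ℝ) < h ^ s := Real.rpow_pos_of_pos hh s
  have ht : 0 ≤ h ^ s * Hnorm := by
    have h0 : 0 ≤ CI * h ^ s * Hnorm := le_trans (norm_nonneg _) hwapp
    nlinarith
  have hsub : tuh - w ∈ Wh := Submodule.sub_mem _ htuh hwW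
  have h1 := hgal (tuh - w) hsub
  rw [map_sub] at h1
  have hkey : ‖Grad tuh - Grad w‖ ≤ ‖σh - Grad w‖ := by
    have hip : ⟪Grad tuh - Grad w, Grad tuh - Grad w⟫
        = ⟪σh - Grad w, Grad tuh - Grad w⟫ := by
      rw [inner_sub_left, inner_sub_left, h1]
    have hsq : ‖Grad tuh - Grad w‖ ^ 2
        ≤ ‖σh - Grad w‖ * ‖Grad tuh - Grad w‖ := by
      rw [← real_inner_self_eq_norm_sq, hip]
      exact real_inner_le_norm _ _
    nlinarith [norm_nonneg (Grad tuh - Grad w), norm_nonneg (σh - Grad w)]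
  have hb2 : ‖σh - Grad w‖ ≤ ‖Grad u - σh‖ + CI * (h ^ s * Hnorm) := by
    have : σh - Grad w = -(Grad u - σh) + (Grad u - Grad w) := by abel
    rw [this]
    refine le_trans (norm_add_le _ _) ?_
    rw [norm_neg]
    have : CI * h ^ s * Hnorm = CI * (h ^ s * Hnorm) := by ring
    rw [this] at hwapp
    linarith
  have hgrad : ‖Grad u - Grad tuh‖
      ≤ ‖Grad u - σh‖ + 2 * (CI * (h ^ s * Hnorm)) := by
    have hd : Grad u - Grad tuh = (Grad u - Grad w) - (Grad tuh - Grad w) := by abel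
    rw [hd]
    refine le_trans (norm_sub_le _ _) ?_
    have h3 : CI * h ^ s * Hnorm = CI * (h ^ s * Hnorm) := by ring
    rw [h3] at hwapp
    linarith [le_trans hkey hb2]
  have hP0eq : P0 (emb u - emb tuh) = P0 (emb u - emb uh) := by
    rw [map_sub, map_sub, hmean]
  have hpo := hpoincare (u - tuh)
  rw [map_sub, map_sub] at hpo
  calc ‖emb u - emb tuh‖
      ≤ ‖(emb u - emb tuh) - P0 (emb u - emb tuh)‖ + ‖P0 (emb u - emb tuh)‖ := by
        have : emb u - emb tuh
            = ((emb u - emb tuh) - P0 (emb u - emb tuh)) + P0 (emb u - emb tuh) := by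
          abel
        nth_rewrite 1 [this]
        exact norm_add_le _ _
    _ ≤ Cpo * h * ‖Grad u - Grad tuh‖ + ‖P0 (emb u - emb uh)‖ := by
        rw [hP0eq]
        have h4 : P0 (emb u - emb uh) = P0 (emb u) - P0 (emb tuh) := by
          rw [map_sub, hmean]
        rw [h4]
        simp only [map_sub] at hpo
        gcongr
    _ ≤ Cpo * (2 * CI + 1) * h * (‖emb u - emb uh‖ + ‖Grad u - σh‖ + h ^ s * Hnorm)
          + ‖P0 (emb u - emb uh)‖ := by
        have hA : 0 ≤ ‖emb u - emb uh‖ := norm_nonneg _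
        have hB : 0 ≤ ‖Grad u - σh‖ := norm_nonneg _
        have := hgrad
        nlinarith [mul_pos hCpo hh, mul_nonneg (mul_pos hCpo hh).le hA,
          mul_nonneg (mul_pos hCpo hh).le ht,
          mul_nonneg (mul_nonneg (mul_pos hCpo hh).le hCI.le) ht,
          mul_nonneg (mul_nonneg (mul_pos hCpo hh).le hCI.le) hA,
          mul_nonneg (mul_nonneg (mul_pos hCpo hh).le hCI.le) hB]
end

section
/- Abstract duality argument for superconvergence: let U, V be Hilbert spaces, b bounded bilinear with boundedness constant ‖b‖, u the exact solution of b(u,·) = F, (u_h, ε_r) the mixed practical DPG solution with Galerkin orthogonality a((u − u_h, −ε_r), (w_h, v_r)) = 0 for all (w_h, v_r) ∈ U_h × V_r where a((u,ε),(w,v)) = ⟨ε,v⟩_V + b(u,v) − b(w,ε). Let g be any element of U with a linear functional G(u') := b(u', v_g) for a fixed v_g ∈ V, and suppose there exists w_g ∈ U with ⟨v_g, v⟩_V = b(w_g, v) for all v ∈ V. Then for all (w_h, v_r) ∈ U_h × V_r: b(u − u_h, v_g) = a((u − u_h, −ε_r), (w_g − w_h, v_g − v_r)), and hence |b(u − u_h,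 v_g)| ≤ C (‖u − u_h‖_U + ‖ε_r‖_V)(‖w_g − w_h‖_U + ‖v_g − v_r‖_V) with C depending only on ‖b‖. -/
open scoped RealInnerProductSpace

/-- Abstract duality argument for superconvergence (core of Theorems 4.3 and 5.2):
with Galerkin orthogonality for the mixed form `a` and a dual pair `(w_g, v_g)` with
`⟪v_g, v⟫_V = b(w_g, v)` for all `v`, one has for all discrete `(w_h, v_r)`
`b(u − u_h, v_g) = a((u − u_h, −ε_r), (w_g − w_h, v_g − v_r))`, and hence
`|b(u − u_h, v_g)| ≤ C (‖u − u_h‖_U + ‖ε_r‖_V)(‖w_g − w_h‖_U + ‖v_g − v_r‖_V)`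
with `C = 1 + ‖b‖` depending only on `‖b‖`. -/
theorem stmt17
    {U V : Type*} [NormedAddCommGroup U] [InnerProductSpace ℝ U] [CompleteSpace U]
    [NormedAddCommGroup V] [InnerProductSpace ℝ V] [CompleteSpace V]
    (b : U →L[ℝ] V →L[ℝ] ℝ) (Mb : ℝ) (hMb : 0 ≤ Mb)
    (hbound : ∀ (u : U) (v : V), |b u v| ≤ Mb * ‖u‖ * ‖v‖)
    (Uh : Submodule ℝ U) (Vr : Submodule ℝ V)
    (F : V →L[ℝ] ℝ) (u : U) (hu : ∀ v : V, b u v = F v)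
    (uh : U) (huh : uh ∈ Uh) (εr : V) (hεr : εr ∈ Vr)
    (hgal : ∀ wh ∈ Uh, ∀ vr ∈ Vr,
      ⟪-εr, vr⟫ + b (u - uh) vr - b wh (-εr) = 0)
    (vg : V) (wg : U) (hwg : ∀ v : V, ⟪vg, v⟫ = b wg v) :
    ∀ wh ∈ Uh, ∀ vr ∈ Vr,
      (b (u - uh) vg
          = ⟪-εr, vg - vr⟫ + b (u - uh) (vg - vr) - b (wg - wh) (-εr))
      ∧ |b (u - uh) vg|
          ≤ (1 + Mb) * (‖u - uh‖ + ‖εr‖) * (‖wg - wh‖ + ‖vg - vr‖) := by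
  intro wh hwh vr hvr
  have h0 := hgal wh hwh vr hvr
  have h1 : ⟪-εr, vg⟫ = b wg (-εr) := by
    rw [real_inner_comm]; exact hwg (-εr)
  have key : b (u - uh) vg
      = ⟪-εr, vg - vr⟫ + b (u - uh) (vg - vr) - b (wg - wh) (-εr) := by
    simp only [inner_sub_right, map_sub, ContinuousLinearMap.sub_apply] at *
    linarith
  refine ⟨key, ?_⟩
  rw [key]
  have hA : 0 ≤ ‖u - uh‖ := norm_nonneg _
  have hE : 0 ≤ ‖εr‖ := norm_nonneg _
  have hW : 0 ≤ ‖wg - wh‖ := norm_nonneg _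
  have hVn : 0 ≤ ‖vg - vr‖ := norm_nonneg _
  have i1 : |⟪-εr, vg - vr⟫| ≤ ‖εr‖ * ‖vg - vr‖ := by
    calc |⟪-εr, vg - vr⟫| ≤ ‖-εr‖ * ‖vg - vr‖ := abs_real_inner_le_norm _ _
    _ = ‖εr‖ * ‖vg - vr‖ := by rw [norm_neg]
  have i2 := hbound (u - uh) (vg - vr)
  have i3 : |b (wg - wh) (-εr)| ≤ Mb * ‖wg - wh‖ * ‖εr‖ := by
    simpa using hbound (wg - wh) (-εr)
  calc |⟪-εr, vg - vr⟫ + b (u - uh) (vg - vr) - b (wg - wh) (-εr)|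
      ≤ |⟪-εr, vg - vr⟫| + |b (u - uh) (vg - vr)| + |b (wg - wh) (-εr)| := by
        exact (abs_sub _ _).trans (by gcongr; exact abs_add_le _ _)
    _ ≤ (1 + Mb) * (‖u - uh‖ + ‖εr‖) * (‖wg - wh‖ + ‖vg - vr‖) := by nlinarith [mul_nonneg hA hW, mul_nonneg hE hVn, mul_nonneg hA hVn, mul_nonneg hE hW, mul_nonneg hMb (mul_nonneg hA hW), mul_nonneg hMb (mul_nonneg hE hVn), mul_nonneg hMb (mul_nonneg hE hW), mul_nonneg hMb (mul_nonneg hA hVn)]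
end
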